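/- Let X be a real random variable with E[exp(θX)] finite for all θ and X not almost surely constant. For any fixed t ≠ 0, the function α ↦ α·Λ(t/α), where Λ(θ) = log E[exp(θX)], is strictly convex on (0, ∞), since its second derivative equals (t²/α³) times the variance of X under the exponentially tilted measure, which is strictly positive. -/

import Mathlib

open MeasureTheory Real
open scoped RealInnerProductSpace

section aux

variable {Ω : Type*} [MeasurableSpace Ω] {μ : Measure Ω} [IsProbabilityMeasure μ]

/-- Convexity of the cumulant generating function, via Hölder. -/
lemma aux_convexOn_cgf (X : Ω → ℝ) (hX : Measurable X)
    (hint : ∀ θ : ℝ, Integrable (fun ω => Real.exp (θ * X ω)) μ) :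
    ConvexOn ℝ Set.univ (fun θ : ℝ => Real.log (∫ ω, Real.exp (θ * X ω) ∂μ)) := by
  refine convexOn_iff_forall_pos.mpr ⟨convex_univ, fun x _ y _ a b ha hb hab => ?_⟩
  have e : Real.HolderConjugate (1 / a) (1 / b) := Real.holderConjugate_one_div ha hb hab
  set F : Ω → ℝ := fun ω => Real.exp (a * x * X ω) with hF
  set G : Ω → ℝ := fun ω => Real.exp (b * y * X ω) with hG
  have hF0 : 0 ≤ᵐ[μ] F := Filter.Eventually.of_forall fun ω => (Real.exp_pos _).le
  have hG0 : 0 ≤ᵐ[μ] G := Filter.Eventually.of_forall fun ω => (Real.exp_pos _).le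
  have memLp : ∀ (c u : ℝ), 0 < c → MemLp (fun ω => Real.exp (c * u * X ω))
      (ENNReal.ofReal (1 / c)) μ := by
    intro c u hc
    have A : ENNReal.ofReal (1 / c) ≠ 0 := by
      rwa [Ne, ENNReal.ofReal_eq_zero, not_le, one_div_pos]
    have B : ENNReal.ofReal (1 / c) ≠ ⊤ := ENNReal.ofReal_ne_top
    have hmeas : AEStronglyMeasurable (fun ω => Real.exp (c * u * X ω)) μ := (hint (c * u)).1
    rw [← memLp_norm_rpow_iff hmeas A B, ENNReal.toReal_ofReal (one_div_nonneg.mpr hc.le),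
      ENNReal.div_self A B, memLp_one_iff_integrable]
    apply (hint u).congr
    filter_upwards with ω
    rw [Real.norm_of_nonneg (Real.exp_pos _).le, ← Real.exp_mul]
    congr 1
    field_simp
  have key := MeasureTheory.integral_mul_le_Lp_mul_Lq_of_nonneg e hF0 hG0
    (memLp a x ha) (memLp b y hb)
  rw [one_div_one_div, one_div_one_div] at key
  have h1 : (∫ ω, F ω * G ω ∂μ) = ∫ ω, Real.exp ((a * x + b * y) * X ω) ∂μ := by
    refine integral_congr_ae (Filter.Eventually.of_forall fun ω => ?_)
    rw [hF, hG]
    simp only [← Real.exp_add]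
    ring_nf
  have h2 : (∫ ω, F ω ^ (1 / a) ∂μ) = ∫ ω, Real.exp (x * X ω) ∂μ := by
    refine integral_congr_ae (Filter.Eventually.of_forall fun ω => ?_)
    show Real.exp (a * x * X ω) ^ (1 / a) = Real.exp (x * X ω)
    rw [← Real.exp_mul]
    congr 1
    field_simp
  have h3 : (∫ ω, G ω ^ (1 / b) ∂μ) = ∫ ω, Real.exp (y * X ω) ∂μ := by
    refine integral_congr_ae (Filter.Eventually.of_forall fun ω => ?_)
    show Real.exp (b * y * X ω) ^ (1 / b) = Real.exp (y * X ω)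
    rw [← Real.exp_mul]
    congr 1
    field_simp
  rw [h1, h2, h3] at key
  have Ix : 0 < ∫ ω, Real.exp (x * X ω) ∂μ := ProbabilityTheory.mgf_pos (hint x)
  have Iy : 0 < ∫ ω, Real.exp (y * X ω) ∂μ := ProbabilityTheory.mgf_pos (hint y)
  have Imix : 0 < ∫ ω, Real.exp ((a * x + b * y) * X ω) ∂μ :=
    ProbabilityTheory.mgf_pos (hint _)
  have := Real.log_le_log Imix key
  rw [Real.log_mul (Real.rpow_pos_of_pos Ix a).ne' (Real.rpow_pos_of_pos Iy b).ne',
    Real.log_rpow Ix, Real.log_rpow Iy] at this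
  simpa [smul_eq_mul] using this

end aux

section aux2

variable {Ω : Type*} [MeasurableSpace Ω] {μ : Measure Ω} [IsProbabilityMeasure μ]

lemma aux_strict_mid (X : Ω → ℝ) (hX : Measurable X)
    (hint : ∀ θ : ℝ, Integrable (fun ω => Real.exp (θ * X ω)) μ)
    (hnd : ¬ ∃ c : ℝ, ∀ᵐ ω ∂μ, X ω = c) {x y : ℝ} (hxy : x ≠ y) :
    Real.log (∫ ω, Real.exp (((x + y) / 2) * X ω) ∂μ) <
      (Real.log (∫ ω, Real.exp (x * X ω) ∂μ) + Real.log (∫ ω, Real.exp (y * X ω) ∂μ)) / 2 := by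
  have hmem : ∀ u : ℝ, MemLp (fun ω => Real.exp ((u / 2) * X ω)) 2 μ := by
    intro u
    rw [memLp_two_iff_integrable_sq (hint (u / 2)).1]
    apply (hint u).congr
    filter_upwards with ω
    rw [sq, ← Real.exp_add]
    congr 1
    ring
  set f : Ω → ℝ := fun ω => Real.exp ((x / 2) * X ω) with hf
  set g : Ω → ℝ := fun ω => Real.exp ((y / 2) * X ω) with hg
  set F : Lp ℝ 2 μ := (hmem x).toLp f with hFdef
  set G : Lp ℝ 2 μ := (hmem y).toLp g with hGdef
  have hFf : (F : Ω → ℝ) =ᵐ[μ] f := MemLp.coeFn_toLp _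
  have hGg : (G : Ω → ℝ) =ᵐ[μ] g := MemLp.coeFn_toLp _
  have hinner : ⟪F, G⟫ = ∫ ω, Real.exp (((x + y) / 2) * X ω) ∂μ := by
    rw [MeasureTheory.L2.inner_def]
    refine integral_congr_ae ?_
    filter_upwards [hFf, hGg] with ω h1 h2
    rw [RCLike.inner_apply, h1, h2, starRingEnd_apply, star_trivial, hf, hg, ← Real.exp_add]
    congr 1
    ring
  have hnormF : ‖F‖ ^ 2 = ∫ ω, Real.exp (x * X ω) ∂μ := by
    rw [← real_inner_self_eq_norm_sq, MeasureTheory.L2.inner_def]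
    refine integral_congr_ae ?_
    filter_upwards [hFf] with ω h1
    rw [RCLike.inner_apply, h1, starRingEnd_apply, star_trivial, hf, ← Real.exp_add]
    congr 1
    ring
  have hnormG : ‖G‖ ^ 2 = ∫ ω, Real.exp (y * X ω) ∂μ := by
    rw [← real_inner_self_eq_norm_sq, MeasureTheory.L2.inner_def]
    refine integral_congr_ae ?_
    filter_upwards [hGg] with ω h1
    rw [RCLike.inner_apply, h1, starRingEnd_apply, star_trivial, hg, ← Real.exp_add]
    congr 1
    ring
  have Ix : (0:ℝ) < ∫ ω, Real.exp (x * X ω) ∂μ := ProbabilityTheory.mgf_pos (hint x)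
  have Iy : (0:ℝ) < ∫ ω, Real.exp (y * X ω) ∂μ := ProbabilityTheory.mgf_pos (hint y)
  have Im : (0:ℝ) < ∫ ω, Real.exp (((x + y) / 2) * X ω) ∂μ :=
    ProbabilityTheory.mgf_pos (hint _)
  have hF0 : 0 < ‖F‖ := by nlinarith [norm_nonneg F, hnormF]
  have hG0 : 0 < ‖G‖ := by nlinarith [norm_nonneg G, hnormG]
  -- strict Cauchy-Schwarz
  have hne : ‖G‖ • F ≠ ‖F‖ • G := by
    intro heq
    apply hnd
    have hae : (fun ω => ‖G‖ * f ω) =ᵐ[μ] (fun ω => ‖F‖ * g ω) := by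
      have h1 : ((‖G‖ • F : Lp ℝ 2 μ) : Ω → ℝ) =ᵐ[μ] fun ω => ‖G‖ * f ω := by
        filter_upwards [Lp.coeFn_smul (‖G‖) F, hFf] with ω ha hb
        simp [ha, hb]
      have h2 : ((‖F‖ • G : Lp ℝ 2 μ) : Ω → ℝ) =ᵐ[μ] fun ω => ‖F‖ * g ω := by
        filter_upwards [Lp.coeFn_smul (‖F‖) G, hGg] with ω ha hb
        simp [ha, hb]
      exact (h1.symm.trans (heq ▸ h2 : ((‖G‖ • F : Lp ℝ 2 μ) : Ω → ℝ) =ᵐ[μ] fun ω => ‖F‖ * g ω))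
    refine ⟨2 * Real.log (‖F‖ / ‖G‖) / (x - y), ?_⟩
    filter_upwards [hae] with ω hω
    have hxyne : x - y ≠ 0 := sub_ne_zero.mpr hxy
    have hexp : Real.exp (((x - y) / 2) * X ω) = ‖F‖ / ‖G‖ := by
      rw [eq_div_iff hG0.ne']
      have : Real.exp (((x - y) / 2) * X ω) * g ω = f ω := by
        rw [hf, hg, ← Real.exp_add]; congr 1; ring
      calc Real.exp (((x - y) / 2) * X ω) * ‖G‖
          = ‖G‖ * f ω / g ω := by
            rw [← this]; field_simp [hg, (Real.exp_pos _).ne']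
        _ = ‖F‖ * g ω / g ω := by rw [hω]
        _ = ‖F‖ := by field_simp [hg, (Real.exp_pos _).ne']
    have := congrArg Real.log hexp
    rw [Real.log_exp] at this
    field_simp at this ⊢
    linarith
  have hcs : ⟪F, G⟫ < ‖F‖ * ‖G‖ := inner_lt_norm_mul_iff_real.mpr hne
  rw [hinner] at hcs
  have hlog := Real.log_lt_log Im hcs
  rw [Real.log_mul hF0.ne' hG0.ne'] at hlog
  have eF : Real.log ‖F‖ = Real.log (∫ ω, Real.exp (x * X ω) ∂μ) / 2 := by
    rw [← hnormF, Real.log_pow]; push_cast; ring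
  have eG : Real.log ‖G‖ = Real.log (∫ ω, Real.exp (y * X ω) ∂μ) / 2 := by
    rw [← hnormG, Real.log_pow]; push_cast; ring
  rw [eF, eG] at hlog
  linarith

end aux2

lemma aux_strictConvexOn_of_mid {s : Set ℝ} {f : ℝ → ℝ} (hc : ConvexOn ℝ s f)
    (hm : ∀ x ∈ s, ∀ y ∈ s, x ≠ y → f ((x + y) / 2) < (f x + f y) / 2) :
    StrictConvexOn ℝ s f := by
  refine ⟨hc.1, fun x hx y hy hxy a b ha hb hab => ?_⟩
  simp only [smul_eq_mul]
  rcases lt_trichotomy a (1 / 2) with h | h | h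
  · -- a < 1/2 : a•x+b•y = (d+y)/2 with d = 2a x + (2b-1) y
    have hd : (2 * a) + (2 * b - 1) = 1 := by linarith
    have hdmem : 2 * a * x + (2 * b - 1) * y ∈ s := by
      have := hc.1 hx hy (by linarith : (0:ℝ) ≤ 2 * a) (by linarith : (0:ℝ) ≤ 2 * b - 1) hd
      simpa [smul_eq_mul] using this
    have hne : 2 * a * x + (2 * b - 1) * y ≠ y := by
      intro hEq
      apply hxy
      have h2 : 2 * a * x = 2 * a * y := by linear_combination hEq - 2*y*hab
      exact mul_left_cancel₀ (by positivity) h2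
    have h1 := hm _ hdmem _ hy hne
    have h2 : f (2 * a * x + (2 * b - 1) * y) ≤ 2 * a * f x + (2 * b - 1) * f y := by
      have := hc.2 hx hy (by linarith : (0:ℝ) ≤ 2 * a) (by linarith : (0:ℝ) ≤ 2 * b - 1) hd
      simpa [smul_eq_mul] using this
    have heq : (2 * a * x + (2 * b - 1) * y + y) / 2 = a * x + b * y := by ring
    rw [heq] at h1
    linarith
  · have hb' : b = 1 / 2 := by linarith
    have h1 := hm x hx y hy hxy
    have heq : (x + y) / 2 = a * x + b * y := by rw [h, hb']; ring
    rw [heq] at h1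
    rw [h, hb']
    rw [h, hb'] at h1
    linarith
  · -- a > 1/2 : a•x+b•y = (x+d)/2 with d = (2a-1) x + 2b y
    have hd : (2 * a - 1) + 2 * b = 1 := by linarith
    have hdmem : (2 * a - 1) * x + 2 * b * y ∈ s := by
      have := hc.1 hx hy (by linarith : (0:ℝ) ≤ 2 * a - 1) (by linarith : (0:ℝ) ≤ 2 * b) hd
      simpa [smul_eq_mul] using this
    have hne : x ≠ (2 * a - 1) * x + 2 * b * y := by
      intro hEq
      apply hxy
      have h2 : 2 * b * x = 2 * b * y := by linear_combination hEq + 2*x*hab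
      exact mul_left_cancel₀ (by positivity) h2
    have h1 := hm _ hx _ hdmem hne
    have h2 : f ((2 * a - 1) * x + 2 * b * y) ≤ (2 * a - 1) * f x + 2 * b * f y := by
      have := hc.2 hx hy (by linarith : (0:ℝ) ≤ 2 * a - 1) (by linarith : (0:ℝ) ≤ 2 * b) hd
      simpa [smul_eq_mul] using this
    have heq : (x + ((2 * a - 1) * x + 2 * b * y)) / 2 = a * x + b * y := by ring
    rw [heq] at h1
    linarith


/-- For a non-degenerate random variable `X` with everywhere-finite MGF and fixed `t ≠ 0`,
the function α ↦ α Λ(t/α) (Λ the cumulant generating function) is strictly convex on (0, ∞). -/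
theorem stmt_6 {Ω : Type*} [MeasurableSpace Ω] (μ : Measure Ω) [IsProbabilityMeasure μ]
    (X : Ω → ℝ) (hX : Measurable X)
    (hint : ∀ θ : ℝ, Integrable (fun ω => Real.exp (θ * X ω)) μ)
    (hnd : ¬ ∃ c : ℝ, ∀ᵐ ω ∂μ, X ω = c)
    (t : ℝ) (ht : t ≠ 0) :
    StrictConvexOn ℝ (Set.Ioi (0 : ℝ))
      (fun α : ℝ => α * Real.log (∫ ω, Real.exp ((t / α) * X ω) ∂μ)) := by
  set Λ : ℝ → ℝ := fun θ => Real.log (∫ ω, Real.exp (θ * X ω) ∂μ) with hΛ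
  have hsc : StrictConvexOn ℝ Set.univ Λ :=
    aux_strictConvexOn_of_mid (aux_convexOn_cgf X hX hint)
      (fun x _ y _ hxy => aux_strict_mid X hX hint hnd hxy)
  refine ⟨convex_Ioi 0, fun a ha b hb hab p q hp hq hpq => ?_⟩
  simp only [smul_eq_mul]
  have ha' : (0:ℝ) < a := ha
  have hb' : (0:ℝ) < b := hb
  have hc : (0:ℝ) < p * a + q * b := by positivity
  set c : ℝ := p * a + q * b with hcdef
  have hw1 : (0:ℝ) < p * a / c := by positivity
  have hw2 : (0:ℝ) < q * b / c := by positivity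
  have hsum : p * a / c + q * b / c = 1 := by field_simp; exact hcdef.symm
  have hcomb : (p * a / c) * (t / a) + (q * b / c) * (t / b) = t / c := by
    have h1 : p * a / c * (t / a) = p * t / c := by
      field_simp
    have h2 : q * b / c * (t / b) = q * t / c := by
      field_simp
    rw [h1, h2, ← add_div, show p * t + q * t = t by linear_combination t * hpq]
  have hne : t / a ≠ t / b := by
    intro h
    rw [div_eq_div_iff ha'.ne' hb'.ne'] at h
    exact hab (mul_left_cancel₀ ht h.symm)
  have key := hsc.2 (Set.mem_univ (t / a)) (Set.mem_univ (t / b)) hne hw1 hw2 hsum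
  simp only [smul_eq_mul] at key
  rw [hcomb] at key
  have key2 := mul_lt_mul_of_pos_left key hc
  have e1 : c * (p * a / c * Λ (t / a) + q * b / c * Λ (t / b)) =
      p * (a * Λ (t / a)) + q * (b * Λ (t / b)) := by
    field_simp
  rw [e1] at key2
  exact key2
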